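/- For every real number $\alpha$ with $(\sqrt{7}-1)/2 \leq \alpha \leq (\sqrt{13}-1)/2$ and $\alpha \neq 1$, the function $f_\alpha$ is concave on the interval $[0,1]$: for all $x, y \in [0,1]$ and all $t \in [0,1]$, $f_\alpha(t x + (1-t) y) \geq t f_\alpha(x) + (1-t) f_\alpha(y)$. -/

import Mathlib

/-- The function expressing the Rényi-α entanglement of a two-qubit state as a function of
its squared concurrence:
`f_α(x) = (1/(1-α)) * log₂ [ ((1-√(1-x))/2)^α + ((1+√(1-x))/2)^α ]`. -/
noncomputable def renyiF (α x : ℝ) : ℝ :=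
  (1 / (1 - α)) *
    Real.logb 2 (((1 - Real.sqrt (1 - x)) / 2) ^ α + ((1 + Real.sqrt (1 - x)) / 2) ^ α)

open Real Nat


lemma hasSum_sinh_series (y : ℝ) :
    HasSum (fun k : ℕ => y ^ (2 * k + 1) / (2 * k + 1)!) (Real.sinh y) := by
  have hE : HasSum (fun n : ℕ => y ^ n / n !) (Real.exp y) := by
    have := NormedSpace.expSeries_div_hasSum_exp y
    rwa [← Real.exp_eq_exp_ℝ] at this
  have hE' : HasSum (fun n : ℕ => (-y) ^ n / n !) (Real.exp (-y)) := by
    have := NormedSpace.expSeries_div_hasSum_exp (-y)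
    rwa [← Real.exp_eq_exp_ℝ] at this
  have hg : HasSum (fun n : ℕ => (y ^ n - (-y) ^ n) / (2 * n !))
      (Real.sinh y) := by
    rw [Real.sinh_eq]
    have := (hE.sub hE').div_const 2
    convert this using 2 with n
    · rfl
    rw [div_sub_div_same, div_div]
    ring_nf
  have hinj : Function.Injective (fun k : ℕ => 2 * k + 1) := by
    intro a b h
    simpa using h
  have hvan : ∀ n ∉ Set.range (fun k : ℕ => 2 * k + 1),
      (y ^ n - (-y) ^ n) / (2 * n !) = 0 := by
    intro n hn
    have he : Even n := by
      rcases Nat.even_or_odd n with h | h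
      · exact h
      · rcases h with ⟨m, hm⟩
        exact absurd ⟨m, show 2 * m + 1 = n by omega⟩ hn
    rw [he.neg_pow]
    simp
  have := (Function.Injective.hasSum_iff hinj hvan).mpr hg
  convert this using 2 with k
  have hodd : Odd (2 * k + 1) := ⟨k, by ring⟩
  simp only [Function.comp]
  rw [hodd.neg_pow]
  push_cast
  ring


private lemma step_pow (x : ℝ) (n : ℕ) : x ^ (2 * (n + 1) + 3) = x ^ (2 * n + 3) * x ^ 2 := by
  rw [← pow_add]; ring_nf

lemma coeff_nonneg {β : ℝ} (h1 : -(1/5) ≤ β) (h2 : β ^ 2 + 3 * β ≤ 1) (k : ℕ) :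
    0 ≤ β * (β * 3 ^ (2 * k + 1) + (β + 4) - 3 * (1 + 2 * β) ^ (2 * k + 1)
      - (1 - 2 * β) ^ (2 * k + 1)) := by
  have hb3 : β ≤ 1 / 3 := by nlinarith [sq_nonneg β, sq_nonneg (β - 1/3)]
  rcases k with _ | k
  · norm_num
    nlinarith [mul_nonneg (sq_nonneg β) (by linarith : (0:ℝ) ≤ 1 - (β^2 + 3*β))]
  rcases le_or_gt 0 β with hβ | hβ
  · have main : ∀ m : ℕ, 0 ≤ β * 3 ^ (2 * m + 3) + (β + 4)
        - 3 * (1 + 2 * β) ^ (2 * m + 3) - (1 - 2 * β) ^ (2 * m + 3) := by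
      intro m
      induction m with
      | zero =>
        norm_num
        nlinarith [mul_nonneg (mul_nonneg hβ hβ) (by linarith : (0:ℝ) ≤ 1 - (β^2 + 3*β)),
          mul_nonneg hβ (by linarith : (0:ℝ) ≤ 1 - (β^2 + 3*β))]
      | succ n ih =>
        rw [step_pow, step_pow, step_pow]
        set P : ℝ := 3 ^ (2 * n + 3) with hPdef
        set Q : ℝ := (1 + 2 * β) ^ (2 * n + 3) with hQdef
        set R : ℝ := (1 - 2 * β) ^ (2 * n + 3) with hRdef
        have hP : (27:ℝ) ≤ P := by
          rw [hPdef]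
          calc (27:ℝ) = 3 ^ 3 := by norm_num
          _ ≤ 3 ^ (2 * n + 3) := by apply pow_le_pow_right₀ (by norm_num); omega
        have hQ : (0:ℝ) ≤ Q := by rw [hQdef]; positivity
        have hR : (0:ℝ) ≤ R := by rw [hRdef]; apply pow_nonneg; nlinarith
        have t1 : 0 ≤ (1 + 2*β)^2 * (β * P + (β + 4) - 3 * Q - R) :=
          mul_nonneg (sq_nonneg _) ih
        have t2 : β * 27 * (9 - (1+2*β)^2) ≤ β * P * (9 - (1+2*β)^2) :=
          mul_le_mul_of_nonneg_right (mul_le_mul_of_nonneg_left hP hβ)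
            (by nlinarith : (0:ℝ) ≤ 9 - (1+2*β)^2)
        have t3 : 0 ≤ β * R := mul_nonneg hβ hR
        nlinarith [mul_nonneg (mul_nonneg hβ hβ) hβ, sq_nonneg β,
          mul_nonneg hβ (sub_nonneg.2 hb3),
          mul_nonneg (mul_nonneg hβ hβ) (sub_nonneg.2 hb3)]
    have h25 : 2 * (k+1) + 1 = 2 * k + 3 := by ring
    rw [h25]
    exact mul_nonneg hβ (main k)
  · have hβ' : β ≤ 0 := hβ.le
    have main : ∀ m : ℕ, β * 3 ^ (2 * m + 3) + (β + 4)
        - 3 * (1 + 2 * β) ^ (2 * m + 3) - (1 - 2 * β) ^ (2 * m + 3) ≤ 0 := by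
      intro m
      induction m with
      | zero =>
        norm_num
        nlinarith [mul_nonneg (neg_nonneg.2 hβ') (by nlinarith : (0:ℝ) ≤ 1 - 3*β - β^2)]
      | succ n ih =>
        rw [step_pow, step_pow, step_pow]
        set P : ℝ := 3 ^ (2 * n + 3) with hPdef
        set Q : ℝ := (1 + 2 * β) ^ (2 * n + 3) with hQdef
        set R : ℝ := (1 - 2 * β) ^ (2 * n + 3) with hRdef
        have hP : (27:ℝ) ≤ P := by
          rw [hPdef]
          calc (27:ℝ) = 3 ^ 3 := by norm_num
          _ ≤ 3 ^ (2 * n + 3) := by apply pow_le_pow_right₀ (by norm_num); omega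
        have hQ : (0:ℝ) ≤ Q := by rw [hQdef]; apply pow_nonneg; nlinarith
        have hR : (0:ℝ) ≤ R := by rw [hRdef]; apply pow_nonneg; nlinarith
        have t1 : (1 + 2*β)^2 * (β * P + (β + 4) - 3 * Q - R) ≤ 0 :=
          mul_nonpos_of_nonneg_of_nonpos (sq_nonneg _) ih
        have hsq : (1+2*β)^2 ≤ 1 := by nlinarith
        have t2 : β * P * (9 - (1+2*β)^2) ≤ β * 27 * (9 - (1+2*β)^2) :=
          mul_le_mul_of_nonneg_right (by nlinarith : β * P ≤ β * 27)
            (by nlinarith : (0:ℝ) ≤ 9 - (1+2*β)^2)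
        have t3 : β * R ≤ 0 := mul_nonpos_of_nonpos_of_nonneg hβ' hR
        nlinarith [mul_nonneg (neg_nonneg.2 hβ') (neg_nonneg.2 hβ'), sq_nonneg β,
          mul_nonneg (mul_nonneg (neg_nonneg.2 hβ') (neg_nonneg.2 hβ')) (neg_nonneg.2 hβ')]
    have h25 : 2 * (k+1) + 1 = 2 * k + 3 := by ring
    rw [h25]
    nlinarith [mul_nonneg (neg_nonneg.2 hβ') (neg_nonneg.2 (main k))]


lemma phi_nonneg {β θ : ℝ} (h1 : -(1/5) ≤ β) (h2 : β ^ 2 + 3 * β ≤ 1) (hθ : 0 ≤ θ) :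
    0 ≤ β * (β * Real.sinh (3 * θ) + (β + 4) * Real.sinh θ
      - 3 * Real.sinh ((1 + 2 * β) * θ) - Real.sinh ((1 - 2 * β) * θ)) := by
  have hS : HasSum (fun k : ℕ =>
      β * ((β * (3*θ) ^ (2*k+1) + (β+4) * θ ^ (2*k+1)
        - 3 * ((1+2*β)*θ) ^ (2*k+1) - ((1-2*β)*θ) ^ (2*k+1)) / (2*k+1)!))
      (β * (β * Real.sinh (3 * θ) + (β + 4) * Real.sinh θ
      - 3 * Real.sinh ((1 + 2 * β) * θ) - Real.sinh ((1 - 2 * β) * θ))) := by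
    have h3 := (hasSum_sinh_series (3*θ)).mul_left β
    have hθ' := (hasSum_sinh_series θ).mul_left (β+4)
    have hA := (hasSum_sinh_series ((1+2*β)*θ)).mul_left 3
    have hB := hasSum_sinh_series ((1-2*β)*θ)
    have := (((h3.add hθ').sub hA).sub hB).mul_left β
    convert this using 1
    · rfl
    funext k
    field_simp
  refine hS.nonneg fun k => ?_
  have hfac : (0:ℝ) < (2*k+1)! := by positivity
  rw [mul_div_assoc'] 
  apply div_nonneg _ hfac.le
  have expand : β * (β * (3*θ) ^ (2*k+1) + (β+4) * θ ^ (2*k+1)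
      - 3 * ((1+2*β)*θ) ^ (2*k+1) - ((1-2*β)*θ) ^ (2*k+1))
      = (β * (β * 3 ^ (2 * k + 1) + (β + 4) - 3 * (1 + 2 * β) ^ (2 * k + 1)
      - (1 - 2 * β) ^ (2 * k + 1))) * θ ^ (2*k+1) := by
    rw [mul_pow, mul_pow, mul_pow]
    ring
  rw [expand]
  exact mul_nonneg (coeff_nonneg h1 h2 k) (pow_nonneg hθ _)



lemma key_ineq {α p q : ℝ} (hα0 : 0 < α) (h1 : -(1/5) ≤ α - 1)
    (h2 : (α - 1) ^ 2 + 3 * (α - 1) ≤ 1)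
    (hp : 0 < p) (hpq : p < q) (hs : p + q = 1) :
    0 ≤ (α - 1) * (α * (α - 1) * (q - p) * (p ^ (α-2) + q ^ (α-2)) * (p ^ α + q ^ α)
      - α ^ 2 * (q - p) * (q ^ (α-1) - p ^ (α-1)) ^ 2
      - 2 * α * (p ^ α + q ^ α) * (q ^ (α-1) - p ^ (α-1))) := by
  have hq : 0 < q := lt_trans hp hpq
  set θ : ℝ := (Real.log q - Real.log p) / 2 with hθdef
  have hθ : 0 < θ := by
    have := Real.log_lt_log hp hpq
    simp only [hθdef]; linarith
  set a : ℝ := Real.exp θ with hadef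
  set b : ℝ := Real.exp ((α - 1) * θ) with hbdef
  have ha : 0 < a := Real.exp_pos _
  have hb : 0 < b := Real.exp_pos _
  have hlq : Real.log q = Real.log p + 2 * θ := by simp only [hθdef]; ring
  have ha2 : a * a = q / p := by
    rw [hadef, ← Real.exp_add, show θ + θ = Real.log q - Real.log p by rw [hθdef]; ring,
      Real.exp_sub, Real.exp_log hp, Real.exp_log hq]
  have hqa : q = p * (a * a) := by rw [ha2]; field_simp
  set A : ℝ := Real.exp ((α - 2) * Real.log p) with hAdef
  have hA : 0 < A := Real.exp_pos _
  have e1 : p ^ (α - 2) = A := by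
    rw [Real.rpow_def_of_pos hp, hAdef, mul_comm]
  have e2 : p ^ (α - 1) = A * p := by
    rw [Real.rpow_def_of_pos hp, show Real.log p * (α - 1)
      = (α - 2) * Real.log p + Real.log p by ring, Real.exp_add, Real.exp_log hp, hAdef]
  have e3 : p ^ α = A * p * p := by
    rw [Real.rpow_def_of_pos hp, show Real.log p * α
      = (α - 2) * Real.log p + Real.log p + Real.log p by ring, Real.exp_add, Real.exp_add,
      Real.exp_log hp, hAdef]
  have e4 : q ^ (α - 2) = A * (b * b) / (a * a) := by
    rw [Real.rpow_def_of_pos hq, hlq, show (Real.log p + 2 * θ) * (α - 2)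
      = ((α - 2) * Real.log p + ((α - 1) * θ + (α - 1) * θ)) - (θ + θ) by ring,
      Real.exp_sub, Real.exp_add, Real.exp_add, Real.exp_add, hAdef, hbdef, hadef]
  have e5 : q ^ (α - 1) = A * (b * b) / (a * a) * q := by
    rw [Real.rpow_def_of_pos hq, show Real.log q * (α - 1)
      = Real.log q * (α - 2) + Real.log q by ring, Real.exp_add, Real.exp_log hq,
      ← Real.rpow_def_of_pos hq, e4]
  have e6 : q ^ α = A * (b * b) / (a * a) * q * q := by
    rw [Real.rpow_def_of_pos hq, show Real.log q * α
      = Real.log q * (α - 2) + Real.log q + Real.log q by ring, Real.exp_add, Real.exp_add,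
      Real.exp_log hq, ← Real.rpow_def_of_pos hq, e4]
  have E := phi_nonneg h1 h2 hθ.le
  rw [Real.sinh_eq, Real.sinh_eq, Real.sinh_eq, Real.sinh_eq] at E
  rw [show (3:ℝ) * θ = θ + θ + θ by ring,
    show (1 + 2 * (α - 1)) * θ = θ + ((α - 1) * θ + (α - 1) * θ) by ring,
    show (1 - 2 * (α - 1)) * θ = θ - ((α - 1) * θ + (α - 1) * θ) by ring,
    Real.exp_neg, Real.exp_neg, Real.exp_neg, Real.exp_neg,
    Real.exp_add, Real.exp_add, Real.exp_add, Real.exp_sub, Real.exp_add,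
    ← hadef, ← hbdef] at E
  rw [e1, e2, e3, e4, e5, e6, hqa]
  have factor : (α - 1) * (α * (α - 1) * (p * (a*a) - p) * (A + A * (b * b) / (a * a))
        * (A * p * p + A * (b * b) / (a * a) * (p * (a*a)) * (p * (a*a)))
      - α ^ 2 * (p * (a*a) - p) * (A * (b * b) / (a * a) * (p * (a*a)) - A * p) ^ 2
      - 2 * α * (A * p * p + A * (b * b) / (a * a) * (p * (a*a)) * (p * (a*a)))
        * (A * (b * b) / (a * a) * (p * (a*a)) - A * p))
      = (2 * α * A^2 * (p*p*p) * a * b^2) *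
        ((α - 1) * ((α - 1) * ((a * a * a - (a * a * a)⁻¹)/2)
          + (α - 1 + 4) * ((a - a⁻¹)/2)
          - 3 * ((a * (b * b) - (a * (b * b))⁻¹)/2)
          - ((a / (b * b) - (a / (b * b))⁻¹)/2))) := by
    field_simp
    ring
  rw [factor]
  have hpos : 0 ≤ 2 * α * A^2 * (p*p*p) * a * b^2 := by positivity
  exact mul_nonneg hpos E




section deriv

variable (α : ℝ)

noncomputable def Fp (x : ℝ) : ℝ := (1 - Real.sqrt (1 - x)) / 2
noncomputable def Fq (x : ℝ) : ℝ := (1 + Real.sqrt (1 - x)) / 2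
noncomputable def FN (x : ℝ) : ℝ := Fp x ^ α + Fq x ^ α
noncomputable def D1 (x : ℝ) : ℝ :=
  (1 / ((1 - α) * Real.log 2)) *
    ((α / (4 * Real.sqrt (1 - x)) * (Fp x ^ (α-1) - Fq x ^ (α-1))) / FN α x)
noncomputable def D2 (x : ℝ) : ℝ :=
  (1 / ((1 - α) * Real.log 2)) *
    ((α * ((Fp x ^ (α-1) - Fq x ^ (α-1)) / (8 * Real.sqrt (1 - x) ^ 3)
        + (α - 1) / (16 * (1 - x)) * (Fp x ^ (α-2) + Fq x ^ (α-2))) * FN α x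
      - (α / (4 * Real.sqrt (1 - x)) * (Fp x ^ (α-1) - Fq x ^ (α-1))) ^ 2) / FN α x ^ 2)

end deriv

section pt

variable {α x : ℝ} (hα0 : 0 < α) (hx : x ∈ Set.Ioo (0:ℝ) 1)

theorem basic (hx : x ∈ Set.Ioo (0:ℝ) 1) :
    0 < 1 - x ∧ 0 < Real.sqrt (1 - x) ∧ Real.sqrt (1 - x) < 1
      ∧ 0 < Fp x ∧ Fp x < Fq x ∧ Fp x + Fq x = 1 := by
  obtain ⟨h0, h1⟩ := hx
  have hx1 : 0 < 1 - x := by linarith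
  have hs0 : 0 < Real.sqrt (1 - x) := Real.sqrt_pos.2 hx1
  have hsq : Real.sqrt (1 - x) ^ 2 = 1 - x := Real.sq_sqrt hx1.le
  have hs1 : Real.sqrt (1 - x) < 1 := by nlinarith
  refine ⟨hx1, hs0, hs1, ?_, ?_, ?_⟩ <;> simp only [Fp, Fq] <;> [linarith; linarith; ring]

theorem FN_pos (hα0 : 0 < α) (hp : 0 < Fp x) (hq : 0 < Fq x) : 0 < FN α x :=
  add_pos (Real.rpow_pos_of_pos hp _) (Real.rpow_pos_of_pos hq _)

theorem hasDerivAt_renyiF (hα0 : 0 < α) (hα : α ≠ 1) (hx : x ∈ Set.Ioo (0:ℝ) 1) :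
    HasDerivAt (renyiF α) (D1 α x) x := by
  obtain ⟨hx1, hs0, hs1, hp, hpq, hsum⟩ := basic hx
  set s := Real.sqrt (1 - x) with hsdef
  have hq : 0 < Fq x := lt_trans hp hpq
  have hFN : 0 < FN α x := FN_pos hα0 hp hq
  have hds : HasDerivAt (fun y => Real.sqrt (1 - y)) (-(1/(2*s))) x := by
    have h := (Real.hasDerivAt_sqrt (ne_of_gt hx1)).comp x ((hasDerivAt_id x).const_sub 1)
    refine h.congr_deriv ?_
    field_simp
    rfl
  have hdp : HasDerivAt (Fp) (1/(4*s)) x := by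
    have h := (hds.const_sub 1).div_const 2
    refine h.congr_deriv ?_
    field_simp
    ring
  have hdq : HasDerivAt (Fq) (-(1/(4*s))) x := by
    have h := (hds.const_add 1).div_const 2
    refine h.congr_deriv ?_
    field_simp
    ring
  have hdpα : HasDerivAt (fun y => Fp y ^ α) (α * Fp x ^ (α-1) * (1/(4*s))) x :=
    (Real.hasDerivAt_rpow_const (Or.inl hp.ne')).comp x hdp
  have hdqα : HasDerivAt (fun y => Fq y ^ α) (α * Fq x ^ (α-1) * (-(1/(4*s)))) x :=
    (Real.hasDerivAt_rpow_const (Or.inl hq.ne')).comp x hdq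
  have hdN : HasDerivAt (FN α)
      (α / (4 * s) * (Fp x ^ (α-1) - Fq x ^ (α-1))) x := by
    have h := hdpα.add hdqα
    refine h.congr_deriv ?_
    field_simp
    ring
  have hlog : HasDerivAt (fun y => Real.log (FN α y))
      ((FN α x)⁻¹ * (α / (4 * s) * (Fp x ^ (α-1) - Fq x ^ (α-1)))) x :=
    (Real.hasDerivAt_log hFN.ne').comp x hdN
  have heq : renyiF α = fun y => (1 / ((1-α) * Real.log 2)) * Real.log (FN α y) := by
    have h1α : (1:ℝ) - α ≠ 0 := sub_ne_zero.2 (Ne.symm hα)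
    have hlog2 : Real.log 2 ≠ 0 := by
      have := Real.log_pos (by norm_num : (1:ℝ) < 2)
      exact this.ne'
    funext y
    simp only [renyiF, Real.logb, FN, Fp, Fq]
    field_simp
  rw [heq]
  have h := hlog.const_mul (1 / ((1-α) * Real.log 2))
  refine h.congr_deriv ?_
  simp only [D1]
  field_simp
  ring

theorem hasDerivAt_D1 (hα0 : 0 < α) (hα : α ≠ 1) (hx : x ∈ Set.Ioo (0:ℝ) 1) :
    HasDerivAt (D1 α) (D2 α x) x := by
  obtain ⟨hx1, hs0, hs1, hp, hpq, hsum⟩ := basic hx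
  set s := Real.sqrt (1 - x) with hsdef
  have hsq : s ^ 2 = 1 - x := Real.sq_sqrt hx1.le
  have hq : 0 < Fq x := lt_trans hp hpq
  have hFN : 0 < FN α x := FN_pos hα0 hp hq
  have hds : HasDerivAt (fun y => Real.sqrt (1 - y)) (-(1/(2*s))) x := by
    have h := (Real.hasDerivAt_sqrt (ne_of_gt hx1)).comp x ((hasDerivAt_id x).const_sub 1)
    refine h.congr_deriv ?_
    field_simp
    rfl
  have hdp : HasDerivAt (Fp) (1/(4*s)) x := by
    have h := (hds.const_sub 1).div_const 2
    refine h.congr_deriv ?_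
    field_simp
    ring
  have hdq : HasDerivAt (Fq) (-(1/(4*s))) x := by
    have h := (hds.const_add 1).div_const 2
    refine h.congr_deriv ?_
    field_simp
    ring
  -- derivative of the prefactor α / (4 √(1-x))
  have hdinv : HasDerivAt (fun y => α / (4 * Real.sqrt (1 - y))) (α/(8*s^3)) x := by
    have hinv : HasDerivAt (fun y => (Real.sqrt (1 - y))⁻¹)
        (-(-(1/(2*s))) / s^2) x := hds.inv hs0.ne'
    have h := hinv.const_mul (α/4)
    convert h using 1
    · rfl
    · rfl
    · funext y; rw [div_eq_mul_inv]; ring_nf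
    · field_simp
      ring
  -- derivative of the rpow difference
  have hdP : HasDerivAt (fun y => Fp y ^ (α-1) - Fq y ^ (α-1))
      ((α-1) * (Fp x ^ (α-2) + Fq x ^ (α-2)) * (1/(4*s))) x := by
    have h1 := (Real.hasDerivAt_rpow_const (p := α-1) (Or.inl hp.ne')).comp x hdp
    have h2 := (Real.hasDerivAt_rpow_const (p := α-1) (Or.inl hq.ne')).comp x hdq
    have h := h1.sub h2
    rw [show α - 1 - 1 = α - 2 by ring] at h
    refine h.congr_deriv ?_
    ring
  have hdN1 : HasDerivAt (fun y => α / (4 * Real.sqrt (1 - y)) * (Fp y ^ (α-1) - Fq y ^ (α-1)))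
      (α/(8*s^3) * (Fp x ^ (α-1) - Fq x ^ (α-1))
        + α / (4*s) * ((α-1) * (Fp x ^ (α-2) + Fq x ^ (α-2)) * (1/(4*s)))) x :=
    hdinv.mul hdP
  have hdN : HasDerivAt (FN α)
      (α / (4 * s) * (Fp x ^ (α-1) - Fq x ^ (α-1))) x := by
    have hdpα := (Real.hasDerivAt_rpow_const (p := α) (Or.inl hp.ne')).comp x hdp
    have hdqα := (Real.hasDerivAt_rpow_const (p := α) (Or.inl hq.ne')).comp x hdq
    have h := hdpα.add hdqα
    refine h.congr_deriv ?_
    field_simp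
    ring
  have hdquot := (hdN1.div hdN hFN.ne')
  have h := hdquot.const_mul (1 / ((1-α) * Real.log 2))
  have heq : D1 α = fun y => (1 / ((1-α) * Real.log 2)) *
      (α / (4 * Real.sqrt (1 - y)) * (Fp y ^ (α-1) - Fq y ^ (α-1)) / FN α y) := by
    funext y; simp only [D1]
  rw [heq]
  refine h.congr_deriv ?_
  simp only [D2]
  rw [← hsq]
  rw [Real.sqrt_sq hs0.le]
  have h1α : (1:ℝ) - α ≠ 0 := sub_ne_zero.2 (Ne.symm hα)
  have hlog2 : Real.log 2 ≠ 0 := (Real.log_pos (by norm_num : (1:ℝ) < 2)).ne'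
  field_simp
  ring

theorem D2_nonpos (hα0 : 0 < α) (hα : α ≠ 1) (h1 : -(1/5) ≤ α - 1)
    (h2 : (α - 1) ^ 2 + 3 * (α - 1) ≤ 1) (hx : x ∈ Set.Ioo (0:ℝ) 1) :
    D2 α x ≤ 0 := by
  obtain ⟨hx1, hs0, hs1, hp, hpq, hsum⟩ := basic hx
  set s := Real.sqrt (1 - x) with hsdef
  have hsq : s ^ 2 = 1 - x := Real.sq_sqrt hx1.le
  have hq : 0 < Fq x := lt_trans hp hpq
  have hFN : 0 < FN α x := FN_pos hα0 hp hq
  have K := key_ineq hα0 h1 h2 hp hpq hsum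
  have h1α : (1:ℝ) - α ≠ 0 := sub_ne_zero.2 (Ne.symm hα)
  have hα1 : α - 1 ≠ 0 := sub_ne_zero.2 hα
  have hlog2 : 0 < Real.log 2 := Real.log_pos (by norm_num)
  set M : ℝ := α * (α - 1) * (Fq x - Fp x) * (Fp x ^ (α-2) + Fq x ^ (α-2))
        * (Fp x ^ α + Fq x ^ α)
      - α ^ 2 * (Fq x - Fp x) * (Fq x ^ (α-1) - Fp x ^ (α-1)) ^ 2
      - 2 * α * (Fp x ^ α + Fq x ^ α) * (Fq x ^ (α-1) - Fp x ^ (α-1)) with hMdef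
  have hFN' : FN α x = Fp x ^ α + Fq x ^ α := rfl
  have hspq : Fq x - Fp x = s := by simp only [Fp, Fq]; ring
  have hid : D2 α x = -(((α - 1) * M)
      * (1 / ((α-1)^2 * Real.log 2 * (16 * s^3) * (FN α x)^2))) := by
    simp only [D2, hMdef, hFN', hspq]
    rw [← hsq]
    rw [Real.sqrt_sq hs0.le]
    field_simp
    ring
  rw [hid]
  apply neg_nonpos_of_nonneg
  apply mul_nonneg K
  positivity

end pt

theorem renyiF_continuousOn {α : ℝ} (hα0 : 0 < α) :
    ContinuousOn (renyiF α) (Set.Icc (0:ℝ) 1) := by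
  have hFp : Continuous (Fp) := by
    have : Fp = fun y => (1 - Real.sqrt (1 - y)) / 2 := rfl
    rw [this]; fun_prop
  have hFq : Continuous (Fq) := by
    have : Fq = fun y => (1 + Real.sqrt (1 - y)) / 2 := rfl
    rw [this]; fun_prop
  intro x hx
  obtain ⟨hx0, hx1⟩ := hx
  -- positivity of the argument of the logarithm
  have hs0 : 0 ≤ Real.sqrt (1 - x) := Real.sqrt_nonneg _
  have hs1 : Real.sqrt (1 - x) ≤ 1 := by
    calc Real.sqrt (1 - x) ≤ Real.sqrt 1 := Real.sqrt_le_sqrt (by linarith)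
    _ = 1 := Real.sqrt_one
  have hp0 : 0 ≤ Fp x := by simp only [Fp]; linarith
  have hq0 : 0 < Fq x := by simp only [Fq]; linarith
  have hFN : 0 < FN α x :=
    add_pos_of_nonneg_of_pos (Real.rpow_nonneg hp0 _) (Real.rpow_pos_of_pos hq0 _)
  have hc1 : ContinuousAt (fun y => Fp y ^ α) x :=
    (Real.continuousAt_rpow_const (Fp x) α (Or.inr hα0.le)).comp hFp.continuousAt
  have hc2 : ContinuousAt (fun y => Fq y ^ α) x :=
    (Real.continuousAt_rpow_const (Fq x) α (Or.inr hα0.le)).comp hFq.continuousAt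
  have hcN : ContinuousAt (FN α) x := hc1.add hc2
  have hclog : ContinuousAt (fun y => Real.log (FN α y)) x :=
    (Real.continuousAt_log hFN.ne').comp hcN
  have : ContinuousAt (renyiF α) x := by
    have heq : renyiF α = fun y => (1 / (1-α)) * (Real.log (FN α y) / Real.log 2) := by
      funext y
      simp only [renyiF, Real.logb, FN, Fp, Fq]
    rw [heq]
    exact ((hclog.div_const _).const_mul _)
  exact this.continuousWithinAt

theorem renyiF_concaveOn' (α : ℝ) (hα1 : (Real.sqrt 7 - 1) / 2 ≤ α)
    (hα2 : α ≤ (Real.sqrt 13 - 1) / 2) (hα : α ≠ 1) :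
    ConcaveOn ℝ (Set.Icc (0:ℝ) 1) (renyiF α) := by
  -- numeric consequences of the hypotheses
  have h7 : (13:ℝ)/5 ≤ Real.sqrt 7 := by
    rw [show (13:ℝ)/5 = Real.sqrt ((13/5)^2) by rw [Real.sqrt_sq (by norm_num)]]
    exact Real.sqrt_le_sqrt (by norm_num)
  have hα0 : (0:ℝ) < α := by linarith
  have h13 : 2 * α + 1 ≤ Real.sqrt 13 := by linarith
  have hsq13 : (2*α+1)^2 ≤ 13 := by
    have h0 : (0:ℝ) ≤ 2*α+1 := by linarith
    have hs := Real.sq_sqrt (by norm_num : (0:ℝ) ≤ 13)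
    nlinarith [Real.sqrt_nonneg (13:ℝ)]
  have hb1 : -(1/5 : ℝ) ≤ α - 1 := by linarith
  have hb2 : (α - 1)^2 + 3*(α-1) ≤ 1 := by nlinarith
  apply concaveOn_of_hasDerivWithinAt2_nonpos (f' := D1 α) (f'' := D2 α)
    (convex_Icc 0 1) (renyiF_continuousOn hα0)
  · intro x hx
    rw [interior_Icc] at hx
    exact (hasDerivAt_renyiF hα0 hα hx).hasDerivWithinAt
  · intro x hx
    rw [interior_Icc] at hx
    exact (hasDerivAt_D1 hα0 hα hx).hasDerivWithinAt
  · intro x hx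
    rw [interior_Icc] at hx
    exact D2_nonpos hα0 hα hb1 hb2 hx

/-- For `(√7-1)/2 ≤ α ≤ (√13-1)/2`, `α ≠ 1`, the function `f_α` is concave on `[0,1]`. -/
theorem renyiF_concaveOn (α : ℝ) (hα1 : (Real.sqrt 7 - 1) / 2 ≤ α)
    (hα2 : α ≤ (Real.sqrt 13 - 1) / 2) (hα : α ≠ 1) :
    ∀ x y t : ℝ, x ∈ Set.Icc (0:ℝ) 1 → y ∈ Set.Icc (0:ℝ) 1 → t ∈ Set.Icc (0:ℝ) 1 →
      renyiF α (t * x + (1 - t) * y) ≥ t * renyiF α x + (1 - t) * renyiF α y := by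
  intro x y t hx hy ht
  have hcc := renyiF_concaveOn' α hα1 hα2 hα
  have := hcc.2 hx hy ht.1 (by linarith [ht.2] : (0:ℝ) ≤ 1 - t) (by ring)
  simpa using this
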